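/- For every integer d ≥ 2, setting m = d^{d+3} and q = d^{d-2}, the book graph B_{d,m} satisfies HG(B_{d,m}) ≥ q; that is, the players have a winning guessing strategy on B_{d,m} with d^{d-2} colors. -/

import Mathlib

/-- A winning hat-guessing strategy with `q` colors on the graph `G`: each vertex `v` has a
guessing function that depends only on the hat colors of its neighbors, and for every hat
assignment some vertex guesses its own hat color correctly. -/
def SimpleGraph.HatWinning {V : Type*} (G : SimpleGraph V) (q : ℕ) : Prop :=
  ∃ g : V → (V → Fin q) → Fin q,
    (∀ (v : V) (h h' : V → Fin q), (∀ u, G.Adj v u → h u = h' u) → g v h = g v h') ∧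
    ∀ h : V → Fin q, ∃ v, g v h = h v

/-- The hat guessing number of `G`: the largest number of colors admitting a winning strategy. -/
noncomputable def SimpleGraph.hatGuessingNumber {V : Type*} (G : SimpleGraph V) : ℕ :=
  sSup {q | G.HatWinning q}

/-- The book graph `B_{d,m}`: a central clique on `d` vertices together with an independent
set of `m` outer vertices, each joined to all vertices of the central clique. -/
def bookGraph (d m : ℕ) : SimpleGraph (Fin d ⊕ Fin m) where
  Adj a b :=
    match a, b with
    | .inl x, .inl y => x ≠ y
    | .inl _, .inr _ => True
    | .inr _, .inl _ => True
    | .inr _, .inr _ => False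
  symm := by constructor; rintro (x | i) (y | j) h <;> simp_all <;> tauto
  loopless := by constructor; rintro (x | i) h <;> simp_all

open Finset
open scoped NNReal

lemma nat_hybrid {ι α : Type*} (A : Finset α) (J : Finset ι) (hJ : J.Nonempty)
    (Cst : ℕ) (t : α → ℕ) (x : ι → α → ℕ)
    (h : ∀ a ∈ A, t a ^ J.card ≤ Cst * ∏ i ∈ J, x i a) :
    (∑ a ∈ A, t a) ^ J.card ≤ Cst * ∏ i ∈ J, ∑ a ∈ A, x i a := by
  set n := J.card with hn
  have hn0 : n ≠ 0 := by simpa [hn] using hJ.card_pos.ne'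
  by_cases hz : Cst = 0 ∨ ∃ i ∈ J, ∑ a ∈ A, x i a = 0
  · have hta : ∀ a ∈ A, t a = 0 := by
      intro a ha
      have h0 : Cst * ∏ i ∈ J, x i a = 0 := by
        rcases hz with hz | ⟨i, hi, hXi⟩
        · simp [hz]
        · have : x i a = 0 := by
            have := Finset.sum_eq_zero_iff.mp hXi a ha
            exact this
          exact mul_eq_zero_of_right _ (Finset.prod_eq_zero hi this)
      have := (h a ha).trans_eq h0
      exact pow_eq_zero_iff hn0 |>.mp (Nat.le_zero.mp this)
  -- sum is zero
    have : ∑ a ∈ A, t a = 0 := Finset.sum_eq_zero hta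
    simp [this, zero_pow hn0]
  · push_neg at hz
    obtain ⟨hC, hX⟩ := hz
    -- work in ℝ≥0
    set X : ι → ℝ≥0 := fun i => (∑ a ∈ A, x i a : ℕ) with hXdef
    have hXpos : ∀ i ∈ J, X i ≠ 0 := by
      intro i hi
      simp only [hXdef, Ne, Nat.cast_eq_zero]
      exact hX i hi
    set B : ℝ≥0 := (Cst : ℝ≥0) * ∏ i ∈ J, X i with hB
    set Dv : ℝ≥0 := B ^ ((n : ℝ)⁻¹) with hDv
    have key : ∀ a ∈ A, (t a : ℝ≥0) ≤ Dv * ∑ i ∈ J, (n : ℝ≥0)⁻¹ * ((x i a : ℝ≥0) / X i) := by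
      intro a ha
      have h1 : (t a : ℝ≥0) ≤ ((Cst : ℝ≥0) * ∏ i ∈ J, (x i a : ℝ≥0)) ^ ((n : ℝ)⁻¹) := by
        have hcast : ((t a : ℝ≥0)) ^ n ≤ (Cst : ℝ≥0) * ∏ i ∈ J, (x i a : ℝ≥0) := by
          have := h a ha
          push_cast
          exact_mod_cast this
        calc (t a : ℝ≥0) = ((t a : ℝ≥0) ^ n) ^ ((n : ℝ)⁻¹) :=
              (NNReal.pow_rpow_inv_natCast _ hn0).symm
          _ ≤ _ := NNReal.rpow_le_rpow hcast (by positivity)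
      have h2 : (Cst : ℝ≥0) * ∏ i ∈ J, (x i a : ℝ≥0) = B * ∏ i ∈ J, ((x i a : ℝ≥0) / X i) := by
        rw [hB, mul_assoc, ← Finset.prod_mul_distrib]
        congr 1
        apply Finset.prod_congr rfl
        intro i hi
        rw [mul_div_cancel₀]
        exact hXpos i hi
      have h3 : ((Cst : ℝ≥0) * ∏ i ∈ J, (x i a : ℝ≥0)) ^ ((n : ℝ)⁻¹)
          = Dv * (∏ i ∈ J, ((x i a : ℝ≥0) / X i)) ^ ((n : ℝ)⁻¹) := by
        rw [h2, NNReal.mul_rpow, hDv]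
      have h4 : (∏ i ∈ J, ((x i a : ℝ≥0) / X i)) ^ ((n : ℝ)⁻¹)
          ≤ ∑ i ∈ J, (n : ℝ≥0)⁻¹ * ((x i a : ℝ≥0) / X i) := by
        rw [← NNReal.finset_prod_rpow]
        have := NNReal.geom_mean_le_arith_mean_weighted J (fun _ => (n : ℝ≥0)⁻¹)
          (fun i => (x i a : ℝ≥0) / X i) ?_
        · simpa using this
        · rw [Finset.sum_const, nsmul_eq_mul, ← hn]
          rw [mul_inv_cancel₀]
          exact_mod_cast hn0
      calc (t a : ℝ≥0) ≤ _ := h1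
        _ = _ := h3
        _ ≤ _ := by gcongr
    have sum_le : (∑ a ∈ A, (t a : ℝ≥0)) ≤ Dv := by
      calc ∑ a ∈ A, (t a : ℝ≥0) ≤ ∑ a ∈ A, (Dv * ∑ i ∈ J, (n : ℝ≥0)⁻¹ * ((x i a : ℝ≥0) / X i)) :=
            Finset.sum_le_sum key
        _ = Dv * ∑ i ∈ J, (n : ℝ≥0)⁻¹ * ((∑ a ∈ A, (x i a : ℝ≥0)) / X i) := by
            rw [← Finset.mul_sum]
            congr 1
            rw [Finset.sum_comm]
            apply Finset.sum_congr rfl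
            intro i _
            rw [← Finset.mul_sum, Finset.sum_div]
        _ = Dv * ∑ i ∈ J, (n : ℝ≥0)⁻¹ := by
            congr 1
            apply Finset.sum_congr rfl
            intro i hi
            rw [show (∑ a ∈ A, (x i a : ℝ≥0)) = X i by rw [hXdef]; push_cast; ring,
              div_self (hXpos i hi), mul_one]
        _ = Dv := by
            rw [Finset.sum_const, nsmul_eq_mul, ← hn, mul_inv_cancel₀, mul_one]
            exact_mod_cast hn0
    have final : (∑ a ∈ A, (t a : ℝ≥0)) ^ n ≤ B := by
      calc (∑ a ∈ A, (t a : ℝ≥0)) ^ n ≤ Dv ^ n := pow_le_pow_left' sum_le n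
        _ = B := NNReal.rpow_inv_natCast_pow _ hn0
    have hBeq : B = ((Cst * ∏ i ∈ J, ∑ a ∈ A, x i a : ℕ) : ℝ≥0) := by
      rw [hB, hXdef]; push_cast; rfl
    have : (((∑ a ∈ A, t a) ^ n : ℕ) : ℝ≥0) ≤ ((Cst * ∏ i ∈ J, ∑ a ∈ A, x i a : ℕ) : ℝ≥0) := by
      calc (((∑ a ∈ A, t a) ^ n : ℕ) : ℝ≥0) = (∑ a ∈ A, (t a : ℝ≥0)) ^ n := by push_cast; rfl
        _ ≤ B := final
        _ = _ := hBeq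
    exact_mod_cast this

lemma nat_amgm {ι : Type*} (J : Finset ι) (f : ι → ℕ) :
    J.card ^ J.card * ∏ i ∈ J, f i ≤ (∑ i ∈ J, f i) ^ J.card := by
  rcases J.eq_empty_or_nonempty with rfl | hJ
  · simp
  set n := J.card with hn
  have hn0 : n ≠ 0 := by simpa [hn] using hJ.card_pos.ne'
  by_cases hf : ∃ i ∈ J, f i = 0
  · obtain ⟨i, hi, h0⟩ := hf
    rw [Finset.prod_eq_zero hi h0, mul_zero]
    exact Nat.zero_le _
  push_neg at hf
  have key : (∏ i ∈ J, (f i : ℝ≥0)) ^ ((n : ℝ)⁻¹) ≤ ∑ i ∈ J, (n : ℝ≥0)⁻¹ * (f i : ℝ≥0) := by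
    rw [← NNReal.finset_prod_rpow]
    have := NNReal.geom_mean_le_arith_mean_weighted J (fun _ => (n : ℝ≥0)⁻¹)
      (fun i => (f i : ℝ≥0)) ?_
    · simpa using this
    · rw [Finset.sum_const, nsmul_eq_mul, ← hn, mul_inv_cancel₀]
      exact_mod_cast hn0
  have key2 : (∏ i ∈ J, (f i : ℝ≥0)) ≤ (∑ i ∈ J, (n : ℝ≥0)⁻¹ * (f i : ℝ≥0)) ^ n := by
    calc (∏ i ∈ J, (f i : ℝ≥0)) = ((∏ i ∈ J, (f i : ℝ≥0)) ^ ((n : ℝ)⁻¹)) ^ n :=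
          (NNReal.rpow_inv_natCast_pow _ hn0).symm
      _ ≤ _ := pow_le_pow_left' key n
  have key3 : ((n : ℝ≥0)) ^ n * ∏ i ∈ J, (f i : ℝ≥0) ≤ (∑ i ∈ J, (f i : ℝ≥0)) ^ n := by
    have hrw : (∑ i ∈ J, (n : ℝ≥0)⁻¹ * (f i : ℝ≥0)) = (n : ℝ≥0)⁻¹ * ∑ i ∈ J, (f i : ℝ≥0) := by
      rw [Finset.mul_sum]
    rw [hrw, mul_pow] at key2
    have hnn : ((n : ℝ≥0)) ^ n ≠ 0 := by positivity
    calc ((n : ℝ≥0)) ^ n * ∏ i ∈ J, (f i : ℝ≥0)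
        ≤ ((n : ℝ≥0)) ^ n * (((n : ℝ≥0)⁻¹) ^ n * (∑ i ∈ J, (f i : ℝ≥0)) ^ n) := by gcongr
      _ = _ := by
          rw [← mul_assoc, ← mul_pow, mul_inv_cancel₀, one_pow, one_mul]
          exact_mod_cast hn0
  have : ((n ^ n * ∏ i ∈ J, f i : ℕ) : ℝ≥0) ≤ (((∑ i ∈ J, f i) ^ n : ℕ) : ℝ≥0) := by
    push_cast
    exact key3
  exact_mod_cast this

lemma loomis_whitney {ι α : Type*} [DecidableEq ι] [DecidableEq α] [DecidableEq (ι → α)] [Fintype α] (z : α) :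
    ∀ (J : Finset ι) (S : Finset (ι → α)), S.Nonempty →
      S.card ^ (J.card - 1) ≤ ∏ i ∈ J, (S.image (fun c => Function.update c i z)).card := by
  classical
  intro J
  induction J using Finset.induction_on with
  | empty => intro S hS; simp
  | @insert i₀ J hi₀ IH =>
    intro S hS
    rcases J.eq_empty_or_nonempty with rfl | hJne
    · have : (S.image (fun c => Function.update c i₀ z)).Nonempty := hS.image _
      simpa using this.card_pos
    · set mask : ι → (ι → α) → (ι → α) := fun i c => Function.update c i z with hmask
      set Sa : α → Finset (ι → α) := fun a => S.filter (fun c => c i₀ = a) with hSa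
      set Ta : α → Finset (ι → α) := fun a => (Sa a).image (mask i₀) with hTa
      have hJcard : J.card ≠ 0 := by simpa using hJne.card_pos.ne'
      have hmemSa : ∀ a c, c ∈ Sa a → c i₀ = a := fun a c hc => (Finset.mem_filter.mp hc).2
      have hTacard : ∀ a, (Ta a).card = (Sa a).card := by
        intro a
        apply Finset.card_image_of_injOn
        intro c hc c' hc' hcc
        funext j
        by_cases hj : j = i₀
        · subst hj; rw [hmemSa a c hc, hmemSa a c' hc']
        · have := congrFun hcc j
          simpa [hmask, Function.update_of_ne hj] using this
      have hsum : ∑ a : α, (Sa a).card = S.card :=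
        (Finset.card_eq_sum_card_fiberwise (fun c _ => Finset.mem_univ (c i₀))).symm
      have hC : ∀ a, (Ta a).card ≤ (S.image (mask i₀)).card := by
        intro a
        exact Finset.card_le_card (Finset.image_subset_image (Finset.filter_subset _ _))
      -- the per-section per-direction counts add up
      have hxsum : ∀ i ∈ J, ∑ a : α, ((Ta a).image (mask i)).card ≤ (S.image (mask i)).card := by
        intro i hiJ
        have hii₀ : i ≠ i₀ := fun h => hi₀ (h ▸ hiJ)
        set Ba : α → Finset (ι → α) := fun a => (Sa a).image (mask i) with hBa
        have hmemBa : ∀ a w, w ∈ Ba a → w i₀ = a := by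
          intro a w hw
          obtain ⟨c, hc, rfl⟩ := Finset.mem_image.mp hw
          rw [hmask]
          simp only [Function.update_of_ne (Ne.symm hii₀)]
          exact hmemSa a c hc
        have hcardTB : ∀ a, ((Ta a).image (mask i)).card = (Ba a).card := by
          intro a
          have himg : (Ta a).image (mask i) = (Ba a).image (mask i₀) := by
            rw [hTa, Finset.image_image, Finset.image_image]
            apply Finset.image_congr
            intro c _
            simp only [Function.comp_apply, hmask]
            exact Function.update_comm hii₀.symm z z c  -- update (update c i₀ z) i z = update (update c i z) i₀ z
          rw [himg]
          apply Finset.card_image_of_injOn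
          intro w hw w' hw' hww
          funext j
          by_cases hj : j = i₀
          · subst hj; rw [hmemBa a w hw, hmemBa a w' hw']
          · have := congrFun hww j
            simpa [hmask, Function.update_of_ne hj] using this
        have hdisj : ∀ a ∈ (univ : Finset α), ∀ b ∈ (univ : Finset α), a ≠ b →
            Disjoint (Ba a) (Ba b) := by
          intro a _ b _ hab
          rw [Finset.disjoint_left]
          intro w hwa hwb
          exact hab ((hmemBa a w hwa).symm.trans (hmemBa b w hwb))
        have hsub : (univ : Finset α).biUnion Ba ⊆ S.image (mask i) := by
          intro w hw
          obtain ⟨a, _, hwa⟩ := Finset.mem_biUnion.mp hw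
          obtain ⟨c, hc, rfl⟩ := Finset.mem_image.mp hwa
          exact Finset.mem_image_of_mem _ (Finset.filter_subset _ _ hc)
        calc ∑ a : α, ((Ta a).image (mask i)).card = ∑ a : α, (Ba a).card := by
              exact Finset.sum_congr rfl (fun a _ => hcardTB a)
          _ = ((univ : Finset α).biUnion Ba).card := (Finset.card_biUnion hdisj).symm
          _ ≤ (S.image (mask i)).card := Finset.card_le_card hsub
      have hhyp : ∀ a ∈ (univ : Finset α),
          (Ta a).card ^ J.card ≤ (S.image (mask i₀)).card * ∏ i ∈ J, ((Ta a).image (mask i)).card := by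
        intro a _
        rcases (Ta a).eq_empty_or_nonempty with hTae | hTane
        · rw [hTae]
          simp [zero_pow hJcard]
        · have e1 : (Ta a).card ^ J.card = (Ta a).card ^ (J.card - 1) * (Ta a).card := by
            rw [← pow_succ]
            congr 1
            omega
          rw [e1, mul_comm ((S.image (mask i₀)).card)]
          exact Nat.mul_le_mul (IH (Ta a) hTane) (hC a)
      have main := nat_hybrid (univ : Finset α) J hJne ((S.image (mask i₀)).card)
        (fun a => (Ta a).card) (fun i a => ((Ta a).image (mask i)).card) hhyp
      have hst : ∑ a : α, (Ta a).card = S.card := by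
        rw [Finset.sum_congr rfl (fun a _ => hTacard a)]
        exact hsum
      rw [hst] at main
      have hfin : (S.image (mask i₀)).card * ∏ i ∈ J, ∑ a : α, ((Ta a).image (mask i)).card
          ≤ ∏ i ∈ insert i₀ J, (S.image (mask i)).card := by
        rw [Finset.prod_insert hi₀]
        exact Nat.mul_le_mul_left _ (Finset.prod_le_prod' hxsum)
      calc S.card ^ ((insert i₀ J).card - 1) = S.card ^ J.card := by
            rw [Finset.card_insert_of_notMem hi₀]
            simp
        _ ≤ _ := main.trans hfin

lemma card_le_sum_proj {ι α : Type*} [Fintype ι] [Nonempty ι] [DecidableEq ι] [DecidableEq α]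
    [DecidableEq (ι → α)] [Fintype α] (z : α) (S : Finset (ι → α))
    (hS : S.card ≤ (Fintype.card ι) ^ (Fintype.card ι)) :
    S.card ≤ ∑ i : ι, (S.image (fun c => Function.update c i z)).card := by
  by_contra hcon
  push_neg at hcon
  have hSne : S.Nonempty := by
    rcases S.eq_empty_or_nonempty with rfl | h
    · simp at hcon
    · exact h
  set n := Fintype.card ι with hn
  have hn1 : 1 ≤ n := Fintype.card_pos
  set ℓ : ι → ℕ := fun i => (S.image (fun c => Function.update c i z)).card with hℓ
  have hlw : S.card ^ (n - 1) ≤ ∏ i : ι, ℓ i := by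
    have := loomis_whitney z (univ : Finset ι) S hSne
    simpa [hn] using this
  have hamgm : n ^ n * ∏ i : ι, ℓ i ≤ (∑ i : ι, ℓ i) ^ n := by
    have := nat_amgm (univ : Finset ι) ℓ
    simpa [hn] using this
  have hsum_le : ∑ i : ι, ℓ i ≤ S.card - 1 := Nat.le_sub_one_of_lt hcon
  have hchain : n ^ n * S.card ^ (n - 1) < S.card * S.card ^ (n - 1) := by
    calc n ^ n * S.card ^ (n - 1) ≤ n ^ n * ∏ i : ι, ℓ i := Nat.mul_le_mul_left _ hlw
      _ ≤ (∑ i : ι, ℓ i) ^ n := hamgm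
      _ ≤ (S.card - 1) ^ n := Nat.pow_le_pow_left hsum_le n
      _ < S.card ^ n := Nat.pow_lt_pow_left (by have := hSne.card_pos; omega) (by omega)
      _ = S.card * S.card ^ (n - 1) := by
          conv_lhs => rw [show n = 1 + (n - 1) by omega]
          rw [pow_add, pow_one]
  have hlt : n ^ n < S.card := by
    have hpos : 0 < S.card ^ (n - 1) := Nat.pow_pos hSne.card_pos
    exact Nat.lt_of_mul_lt_mul_right hchain
  omega

lemma succ_pow_ge (a : ℕ) : ∀ n : ℕ, a ^ n + n * a ^ (n - 1) ≤ (a + 1) ^ n := by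
  intro n
  induction n with
  | zero => simp
  | succ n IH =>
    rcases Nat.eq_zero_or_pos n with rfl | hn
    · simp [pow_succ]
    · have h1 : (a + 1) ^ (n + 1) = (a + 1) ^ n * (a + 1) := pow_succ _ _
      have h2 : (a ^ n + n * a ^ (n - 1)) * (a + 1) ≤ (a + 1) ^ n * (a + 1) :=
        Nat.mul_le_mul_right _ IH
      have h3 : a ^ (n + 1) + (n + 1) * a ^ n ≤ (a ^ n + n * a ^ (n - 1)) * (a + 1) := by
        have hpow : a ^ (n - 1) * a = a ^ n := by
          rw [← pow_succ]
          congr 1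
          omega
        calc a ^ (n + 1) + (n + 1) * a ^ n
            = a ^ n * a + n * a ^ n + a ^ n := by ring
          _ = a ^ n * a + n * (a ^ (n - 1) * a) + a ^ n := by rw [hpow]
          _ ≤ a ^ n * a + n * (a ^ (n - 1) * a) + a ^ n + n * a ^ (n - 1) := by omega
          _ = (a ^ n + n * a ^ (n - 1)) * (a + 1) := by ring
      simp only [Nat.add_sub_cancel]
      rw [h1]
      exact h3.trans h2
  -- q ≥ 2 → 2 * (q-1)^q ≤ q^q
lemma two_mul_pred_pow (q : ℕ) (hq : 2 ≤ q) : 2 * (q - 1) ^ q ≤ q ^ q := by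
  obtain ⟨p, rfl⟩ : ∃ p, q = p + 2 := ⟨q - 2, by omega⟩
  rw [show p + 2 - 1 = p + 1 by omega]
  have h1 := succ_pow_ge (p + 1) (p + 2)
  rw [show p + 2 - 1 = p + 1 by omega] at h1
  have h4 : (p + 1) * (p + 1) ^ (p + 1) = (p + 1) ^ (p + 2) := by
    rw [← pow_succ']
  have h3 : (p + 1) * (p + 1) ^ (p + 1) ≤ (p + 2) * (p + 1) ^ (p + 1) :=
    Nat.mul_le_mul_right _ (by omega)
  have h5 : (p + 1) ^ (p + 2) ≤ (p + 2) * (p + 1) ^ (p + 1) := h4 ▸ h3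
  have h6 : (p + 1 + 1) ^ (p + 2) = (p + 2) ^ (p + 2) := by norm_num
  rw [h6] at h1
  omega

lemma key_counting (d : ℕ) (hd : 3 ≤ d) :
    (d ^ (d - 2)) ^ (d * d ^ d + d ^ (d + 3)) * (d ^ (d - 2) - 1) ^ (d ^ d * d ^ (d + 3))
      < (d ^ (d - 2)) ^ (d ^ d * d ^ (d + 3)) := by
  set q := d ^ (d - 2) with hqdef
  set D := d ^ d with hDdef
  set m := d ^ (d + 3) with hmdef
  set E := d ^ (d + 5) with hEdef
  have hd0 : 0 < d := by omega
  have hq2 : 2 ≤ q := by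
    calc 2 ≤ d := by omega
      _ = d ^ 1 := (pow_one d).symm
      _ ≤ d ^ (d - 2) := Nat.pow_le_pow_right hd0 (by omega)
  -- (a) D * m = q * E
  have hDm : D * m = q * E := by
    rw [hDdef, hmdef, hqdef, hEdef, ← pow_add, ← pow_add]
    congr 1
    omega
  -- (c) 2^E * (q-1)^(D*m) ≤ q^(D*m)
  have hc : 2 ^ E * (q - 1) ^ (D * m) ≤ q ^ (D * m) := by
    rw [hDm, pow_mul, pow_mul]
    calc 2 ^ E * ((q - 1) ^ q) ^ E = (2 * (q - 1) ^ q) ^ E := by rw [mul_pow]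
      _ ≤ (q ^ q) ^ E := Nat.pow_le_pow_left (two_mul_pred_pow q hq2) E
  -- (d) q^(d*D+m) < 2^E
  have hdlt : q ^ (d * D + m) < 2 ^ E := by
    have hd2 : d ≤ 2 ^ (d - 1) := by
      have := Nat.lt_two_pow_self (n := d - 1)
      omega
    have hq_le : q ≤ 2 ^ ((d - 1) * (d - 2)) := by
      calc q = d ^ (d - 2) := hqdef
        _ ≤ (2 ^ (d - 1)) ^ (d - 2) := Nat.pow_le_pow_left hd2 _
        _ = 2 ^ ((d - 1) * (d - 2)) := by rw [← pow_mul]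
    have hstep : q ^ (d * D + m) ≤ 2 ^ ((d - 1) * (d - 2) * (d * D + m)) := by
      calc q ^ (d * D + m) ≤ (2 ^ ((d - 1) * (d - 2))) ^ (d * D + m) :=
            Nat.pow_le_pow_left hq_le _
        _ = _ := by rw [← pow_mul]
    have hexp : (d - 1) * (d - 2) * (d * D + m) < E := by
      have h1 : d * D + m = (1 + d ^ 2) * d ^ (d + 1) := by
        rw [hDdef, hmdef]
        have e1 : d * d ^ d = d ^ (d + 1) := by rw [← pow_succ']
        have e2 : d ^ (d + 3) = d ^ 2 * d ^ (d + 1) := by rw [← pow_add]; congr 1; omega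
        rw [e1, e2]
        ring
      have h2 : E = d ^ 4 * d ^ (d + 1) := by
        rw [hEdef, ← pow_add]
        congr 1
        omega
      rw [h1, h2]
      have hpoly : (d - 1) * (d - 2) * (1 + d ^ 2) < d ^ 4 := by
        rcases Nat.exists_eq_add_of_le hd with ⟨e, rfl⟩
        rw [show 3 + e - 1 = e + 2 by omega, show 3 + e - 2 = e + 1 by omega]
        ring_nf
        nlinarith [sq_nonneg e, sq_nonneg (e + 1), Nat.zero_le e]
      calc (d - 1) * (d - 2) * ((1 + d ^ 2) * d ^ (d + 1))
          = ((d - 1) * (d - 2) * (1 + d ^ 2)) * d ^ (d + 1) := by ring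
        _ < d ^ 4 * d ^ (d + 1) :=
            (Nat.mul_lt_mul_right (Nat.pow_pos hd0)).mpr hpoly
    calc q ^ (d * D + m) ≤ 2 ^ ((d - 1) * (d - 2) * (d * D + m)) := hstep
      _ < 2 ^ E := Nat.pow_lt_pow_right (by norm_num) hexp
  -- combine
  have hpos : 0 < (q - 1) ^ (D * m) := Nat.pow_pos (by omega)
  calc q ^ (d * D + m) * (q - 1) ^ (D * m) < 2 ^ E * (q - 1) ^ (D * m) :=
        (Nat.mul_lt_mul_right hpos).mpr hdlt
    _ ≤ q ^ (D * m) := hc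

lemma exists_surjective_family (d : ℕ) (hd : 3 ≤ d) :
    ∃ F : Fin (d ^ (d + 3)) → ((Fin d → Fin (d ^ (d - 2))) → Fin (d ^ (d - 2))),
      ∀ S : Finset (Fin d → Fin (d ^ (d - 2))), S.card = d ^ d →
        ∃ u, ∀ v, ∃ c ∈ S, F u c = v := by
  classical
  set q := d ^ (d - 2) with hqdef
  set D := d ^ d with hDdef
  set m := d ^ (d + 3) with hmdef
  have hd0 : 0 < d := by omega
  have hq2 : 2 ≤ q := by
    calc 2 ≤ d := by omega
      _ = d ^ 1 := (pow_one d).symm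
      _ ≤ d ^ (d - 2) := Nat.pow_le_pow_right hd0 (by omega)
  set N := Fintype.card (Fin d → Fin q) with hN
  have hNval : N = q ^ d := by
    simp [hN]
  have hDN : D ≤ N := by
    rw [hNval, hqdef, hDdef, ← pow_mul]
    apply Nat.pow_le_pow_right hd0
    calc d = 1 * d := (one_mul d).symm
      _ ≤ (d - 2) * d := Nat.mul_le_mul_right d (by omega)
  -- a nonzero color different from v
  have hwit : ∀ v : Fin q, ∃ w : Fin q, w ≠ v := by
    intro v
    rcases Nat.eq_zero_or_pos v.val with h0 | hpos
    · exact ⟨⟨1, by omega⟩, by simp [Fin.ext_iff, h0]⟩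
    · exact ⟨⟨0, by omega⟩, by simp [Fin.ext_iff]; omega⟩
  set badf : Finset (Fin d → Fin q) → Finset ((Fin d → Fin q) → Fin q) :=
    fun S => univ.filter (fun f => ∃ v, ∀ c ∈ S, f c ≠ v) with hbadfdef
  have hbadf : ∀ S : Finset (Fin d → Fin q),
      (badf S).card ≤ q * ((q - 1) ^ S.card * q ^ (N - S.card)) := by
    intro S
    have hone : ∀ v : Fin q,
        (univ.filter (fun f : (Fin d → Fin q) → Fin q => ∀ c ∈ S, f c ≠ v)).card
        ≤ (q - 1) ^ S.card * q ^ (N - S.card) := by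
      intro v
      obtain ⟨w, hw⟩ := hwit v
      set Φ : ((Fin d → Fin q) → Fin q) →
          ((↥S → {x : Fin q // x ≠ v}) × ({c : Fin d → Fin q // c ∉ S} → Fin q)) :=
        fun f => ((fun c : ↥S => if h : f c.1 = v then ⟨w, hw⟩ else ⟨f c.1, h⟩),
          (fun c : {c : Fin d → Fin q // c ∉ S} => f c.1)) with hΦ
      have hcard : (univ : Finset ((↥S → {x : Fin q // x ≠ v}) ×
          ({c : Fin d → Fin q // c ∉ S} → Fin q))).card
          = (q - 1) ^ S.card * q ^ (N - S.card) := by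
        rw [card_univ, Fintype.card_prod, Fintype.card_pi, Fintype.card_pi]
        rw [Finset.prod_const, Finset.prod_const, card_univ, card_univ]
        have e1 : Fintype.card {x : Fin q // x ≠ v} = q - 1 := by
          rw [Fintype.card_subtype_compl, Fintype.card_subtype_eq, Fintype.card_fin]
        have e2 : Fintype.card {c : Fin d → Fin q // c ∉ S} = N - S.card := by
          rw [Fintype.card_subtype_compl, Fintype.card_coe, hN]
        rw [e1, e2, Fintype.card_coe, Fintype.card_fin]
      rw [← hcard]
      apply Finset.card_le_card_of_injOn Φ (fun f _ => mem_univ _)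
      intro f hf g hg hfg
      simp only [mem_coe, mem_filter, mem_univ, true_and] at hf hg
      have h1 := congrArg Prod.fst hfg
      have h2 := congrArg Prod.snd hfg
      simp only [hΦ] at h1 h2
      funext c
      by_cases hc : c ∈ S
      · have := congrFun h1 ⟨c, hc⟩
        rw [dif_neg (hf c hc), dif_neg (hg c hc)] at this
        exact congrArg Subtype.val this
      · exact congrFun h2 ⟨c, hc⟩
    calc (badf S).card ≤ ((univ : Finset (Fin q)).biUnion
          (fun v => univ.filter (fun f : (Fin d → Fin q) → Fin q => ∀ c ∈ S, f c ≠ v))).card := by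
          apply Finset.card_le_card
          intro f hf
          simp only [hbadfdef, mem_filter, mem_univ, true_and] at hf
          obtain ⟨v, hv⟩ := hf
          exact mem_biUnion.mpr ⟨v, mem_univ _, mem_filter.mpr ⟨mem_univ _, hv⟩⟩
      _ ≤ ∑ v : Fin q, (univ.filter (fun f : (Fin d → Fin q) → Fin q => ∀ c ∈ S, f c ≠ v)).card :=
          Finset.card_biUnion_le
      _ ≤ ∑ _v : Fin q, (q - 1) ^ S.card * q ^ (N - S.card) := Finset.sum_le_sum (fun v _ => hone v)
      _ = q * ((q - 1) ^ S.card * q ^ (N - S.card)) := by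
          rw [Finset.sum_const, card_univ, Fintype.card_fin, smul_eq_mul]
  set Bad : Finset (Fin m → (Fin d → Fin q) → Fin q) :=
    univ.filter (fun F => ∃ S : Finset (Fin d → Fin q), S.card = D ∧ ∀ u, F u ∈ badf S) with hBad
  have hBadsub : Bad ⊆ ((univ : Finset (Fin d → Fin q)).powersetCard D).biUnion
      (fun S => Fintype.piFinset (fun _ : Fin m => badf S)) := by
    intro F hF
    simp only [hBad, mem_filter, mem_univ, true_and] at hF
    obtain ⟨S, hScard, hSall⟩ := hF
    refine mem_biUnion.mpr ⟨S, ?_, ?_⟩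
    · exact Finset.mem_powersetCard_univ.mpr hScard
    · exact Fintype.mem_piFinset.mpr hSall
  have hBadcard : Bad.card ≤ N.choose D * (q * ((q - 1) ^ D * q ^ (N - D))) ^ m := by
    calc Bad.card ≤ (((univ : Finset (Fin d → Fin q)).powersetCard D).biUnion
          (fun S => Fintype.piFinset (fun _ : Fin m => badf S))).card :=
          Finset.card_le_card hBadsub
      _ ≤ ∑ S ∈ (univ : Finset (Fin d → Fin q)).powersetCard D,
            (Fintype.piFinset (fun _ : Fin m => badf S)).card := Finset.card_biUnion_le
      _ ≤ ∑ _S ∈ (univ : Finset (Fin d → Fin q)).powersetCard D,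
            (q * ((q - 1) ^ D * q ^ (N - D))) ^ m := by
          apply Finset.sum_le_sum
          intro S hS
          have hScard : S.card = D := Finset.mem_powersetCard_univ.mp hS
          rw [Fintype.card_piFinset]
          calc ∏ _u : Fin m, (badf S).card = (badf S).card ^ m := by
                rw [Finset.prod_const, card_univ, Fintype.card_fin]
            _ ≤ (q * ((q - 1) ^ D * q ^ (N - D))) ^ m := by
                apply Nat.pow_le_pow_left
                have := hbadf S
                rw [hScard] at this
                exact this
      _ = N.choose D * (q * ((q - 1) ^ D * q ^ (N - D))) ^ m := by
          rw [Finset.sum_const, smul_eq_mul, Finset.card_powersetCard, card_univ, hN]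
  have hstrict : N.choose D * (q * ((q - 1) ^ D * q ^ (N - D))) ^ m
      < Fintype.card (Fin m → (Fin d → Fin q) → Fin q) := by
    have hcardΩ : Fintype.card (Fin m → (Fin d → Fin q) → Fin q) = q ^ (N * m) := by
      rw [Fintype.card_pi, Finset.prod_const, card_univ, Fintype.card_fin]
      rw [Fintype.card_pi, Finset.prod_const, card_univ, Fintype.card_fin, ← hN, ← pow_mul]
    rw [hcardΩ]
    have hkey := key_counting d hd
    rw [← hqdef, ← hDdef, ← hmdef] at hkey
    have hqpos : 0 < q := by omega
    calc N.choose D * (q * ((q - 1) ^ D * q ^ (N - D))) ^ m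
        ≤ N ^ D * (q * ((q - 1) ^ D * q ^ (N - D))) ^ m :=
          Nat.mul_le_mul_right _ (Nat.choose_le_pow N D)
      _ = (q ^ (d * D + m) * (q - 1) ^ (D * m)) * q ^ ((N - D) * m) := by
          rw [hNval, mul_pow, mul_pow, ← pow_mul, ← pow_mul, ← pow_mul, pow_add, ← pow_mul]
          ring
      _ < q ^ (D * m) * q ^ ((N - D) * m) :=
          (Nat.mul_lt_mul_right (Nat.pow_pos hqpos)).mpr hkey
      _ = q ^ (N * m) := by
          rw [← pow_add]
          congr 1
          have : D * m + (N - D) * m = (D + (N - D)) * m := by ring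
          rw [this, Nat.add_sub_cancel' hDN]
  have hne : ∃ F, F ∉ Bad := by
    by_contra hcon
    push_neg at hcon
    have : (univ : Finset (Fin m → (Fin d → Fin q) → Fin q)) ⊆ Bad := fun F _ => hcon F
    have hcard := Finset.card_le_card this
    rw [card_univ] at hcard
    omega
  obtain ⟨F, hF⟩ := hne
  refine ⟨F, ?_⟩
  intro S hScard
  simp only [hBad, mem_filter, mem_univ, true_and] at hF
  push_neg at hF
  obtain ⟨u, hu⟩ := hF S hScard
  refine ⟨u, ?_⟩
  intro v
  simp only [hbadfdef, mem_filter, mem_univ, true_and] at hu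
  push_neg at hu
  obtain ⟨c, hcS, hc⟩ := hu v
  exact ⟨c, hcS, hc⟩

lemma book_hatwinning_main (d : ℕ) (hd : 3 ≤ d) :
    (bookGraph d (d ^ (d + 3))).HatWinning (d ^ (d - 2)) := by
  classical
  have hd0 : 0 < d := by omega
  haveI : Nonempty (Fin d) := ⟨⟨0, hd0⟩⟩
  have hq1 : 0 < d ^ (d - 2) := Nat.pow_pos hd0
  set q := d ^ (d - 2) with hqdef
  set m := d ^ (d + 3) with hmdef
  obtain ⟨F, hF⟩ := exists_surjective_family d hd
  set z : Fin q := ⟨0, hq1⟩ with hzdef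
  set mask : Fin d → (Fin d → Fin q) → (Fin d → Fin q) :=
    fun i c => Function.update c i z with hmask
  set R : (Fin m → Fin q) → Finset (Fin d → Fin q) :=
    fun y => univ.filter (fun c => ∀ u, F u c ≠ y u) with hR
  have hRcard : ∀ y, (R y).card ≤ d ^ d := by
    intro y
    by_contra hcon
    push_neg at hcon
    obtain ⟨S, hSsub, hScard⟩ := Finset.exists_subset_card_eq hcon.le
    obtain ⟨u, hu⟩ := hF S hScard
    obtain ⟨c, hcS, hc⟩ := hu (y u)
    have hmem := hSsub hcS
    rw [hR] at hmem
    exact (Finset.mem_filter.mp hmem).2 u hc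
  have hall : ∀ y : Fin m → Fin q, ∃ f : {c // c ∈ R y} → Fin d × (Fin d → Fin q),
      Function.Injective f ∧
        ∀ x, f x ∈ (univ.image (fun i => (i, mask i x.1)) : Finset (Fin d × (Fin d → Fin q))) := by
    intro y
    rw [← Finset.all_card_le_biUnion_card_iff_exists_injective]
    intro s
    set S := s.image Subtype.val with hSdef
    have hScard : S.card = s.card := Finset.card_image_of_injective _ Subtype.val_injective
    have hSsub : S ⊆ R y := by
      intro c hc
      obtain ⟨x, _hx, rfl⟩ := Finset.mem_image.mp hc
      exact x.2
    have hSsize : S.card ≤ d ^ d := (Finset.card_le_card hSsub).trans (hRcard y)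
    have hbi : s.biUnion (fun x => (univ.image (fun i => (i, mask i x.1)) : Finset (Fin d × (Fin d → Fin q))))
        = (univ : Finset (Fin d)).biUnion (fun i => (S.image (mask i)).image (fun w => (i, w))) := by
      ext p
      simp only [Finset.mem_biUnion, Finset.mem_image, Finset.mem_univ, true_and, hSdef]
      constructor
      · rintro ⟨x, hx, i, rfl⟩
        exact ⟨i, mask i x.1, ⟨x.1, ⟨x, hx, rfl⟩, rfl⟩, rfl⟩
      · rintro ⟨i, w, ⟨cc, ⟨x, hx, rfl⟩, rfl⟩, rfl⟩
        exact ⟨x, hx, i, rfl⟩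
    have hcards : (((univ : Finset (Fin d)).biUnion
          (fun i => (S.image (mask i)).image (fun w => (i, w))))).card
        = ∑ i : Fin d, (S.image (mask i)).card := by
      rw [Finset.card_biUnion]
      · exact Finset.sum_congr rfl (fun i _ => Finset.card_image_of_injective _
          (fun a b hab => (Prod.mk.injEq _ _ _ _ ▸ hab).2))
      · intro a _ b _ hab
        rw [Function.onFun, Finset.disjoint_left]
        rintro p hpa hpb
        obtain ⟨w, -, rfl⟩ := Finset.mem_image.mp hpa
        obtain ⟨w', -, hw'⟩ := Finset.mem_image.mp hpb
        exact hab (congrArg Prod.fst hw').symm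
    have hcond : S.card ≤ ∑ i : Fin d, (S.image (mask i)).card := by
      have := card_le_sum_proj z S (by simpa [Fintype.card_fin] using hSsize)
      simpa [hmask] using this
    calc s.card = S.card := hScard.symm
      _ ≤ ∑ i : Fin d, (S.image (mask i)).card := hcond
      _ = _ := by rw [hbi, hcards]
  choose matching hminj hmmem using hall
  set spineGuess : Fin d → (Fin d → Fin q) → (Fin m → Fin q) → Fin q := fun i c' y =>
    if hx : ∃ x : {c // c ∈ R y}, matching y x = (i, c') then (Classical.choose hx).1 i else z
    with hsg
  refine ⟨fun v => match v with
    | Sum.inl i => fun h =>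
        spineGuess i (mask i (fun j => h (Sum.inl j))) (fun u => h (Sum.inr u))
    | Sum.inr u => fun h => F u (fun j => h (Sum.inl j)), ?_, ?_⟩
  · rintro (i | u) h h' hagr
    · have e1 : (fun u => h (Sum.inr u)) = (fun u => h' (Sum.inr u)) :=
        funext fun u => hagr (Sum.inr u) trivial
      have e2 : mask i (fun j => h (Sum.inl j)) = mask i (fun j => h' (Sum.inl j)) := by
        funext j
        by_cases hj : j = i
        · subst hj
          simp [hmask, Function.update_self]
        · simp only [hmask, Function.update_of_ne hj]
          exact hagr (Sum.inl j) (Ne.symm hj)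
      show spineGuess i (mask i (fun j => h (Sum.inl j))) (fun u => h (Sum.inr u))
          = spineGuess i (mask i (fun j => h' (Sum.inl j))) (fun u => h' (Sum.inr u))
      rw [e1, e2]
    · have e : (fun j => h (Sum.inl j)) = (fun j => h' (Sum.inl j)) :=
        funext fun j => hagr (Sum.inl j) trivial
      show F u (fun j => h (Sum.inl j)) = F u (fun j => h' (Sum.inl j))
      rw [e]
  · intro h
    by_cases hout : ∃ u, F u (fun j => h (Sum.inl j)) = h (Sum.inr u)
    · obtain ⟨u, hu⟩ := hout
      exact ⟨Sum.inr u, hu⟩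
    · push_neg at hout
      have hcR : (fun j => h (Sum.inl j)) ∈ R (fun u => h (Sum.inr u)) := by
        rw [hR]
        exact Finset.mem_filter.mpr ⟨Finset.mem_univ _, hout⟩
      set x₀ : {c // c ∈ R (fun u => h (Sum.inr u))} := ⟨fun j => h (Sum.inl j), hcR⟩ with hx₀
      obtain ⟨i, -, hi⟩ := Finset.mem_image.mp (hmmem (fun u => h (Sum.inr u)) x₀)
      refine ⟨Sum.inl i, ?_⟩
      have hex : ∃ x : {c // c ∈ R (fun u => h (Sum.inr u))},
          matching (fun u => h (Sum.inr u)) x = (i, mask i (fun j => h (Sum.inl j))) :=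
        ⟨x₀, hi.symm⟩
      have hchoose : Classical.choose hex = x₀ := by
        apply hminj (fun u => h (Sum.inr u))
        rw [Classical.choose_spec hex, ← hi]
      show (if hx : ∃ x : {c // c ∈ R (fun u => h (Sum.inr u))},
            matching (fun u => h (Sum.inr u)) x = (i, mask i (fun j => h (Sum.inl j))) then
          (Classical.choose hx).1 i
        else z) = h (Sum.inl i)
      rw [dif_pos hex, hchoose]

lemma hatWinning_le_card {V : Type*} [Fintype V] [Nonempty V]
    (G : SimpleGraph V) (q : ℕ) (hw : G.HatWinning q) : q ≤ Fintype.card V := by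
  classical
  rcases Nat.eq_zero_or_pos q with rfl | hq
  · exact Nat.zero_le _
  obtain ⟨g, hloc, hwin⟩ := hw
  set n := Fintype.card V with hn
  have hn1 : 1 ≤ n := Fintype.card_pos
  set z : Fin q := ⟨0, hq⟩ with hz
  have hcover : (univ : Finset (V → Fin q)) ⊆ univ.biUnion
      (fun v => univ.filter (fun h => g v h = h v)) := by
    intro h _
    obtain ⟨v, hv⟩ := hwin h
    exact mem_biUnion.mpr ⟨v, mem_univ _, mem_filter.mpr ⟨mem_univ _, hv⟩⟩
  have htarget : ∀ v : V, (univ.filter (fun h : V → Fin q => h v = z)).card = q ^ (n - 1) := by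
    intro v
    have e1 : (univ.filter (fun h : V → Fin q => h v = z)).card
        = Fintype.card {h : V → Fin q // h v = z} := (Fintype.card_subtype _).symm
    rw [e1]
    have e2 : {h : V → Fin q // h v = z} ≃ ({u : V // u ≠ v} → Fin q) := by
      refine ⟨fun f u => f.1 u.1, fun r => ⟨fun u => if hu : u = v then z else r ⟨u, hu⟩, by simp⟩,
        ?_, ?_⟩
      · intro f
        apply Subtype.ext
        funext u
        by_cases hu : u = v
        · subst hu
          simpa using f.2.symm
        · simp [hu]
      · intro r
        funext u
        simp [u.2]
    rw [Fintype.card_congr e2, Fintype.card_pi, Finset.prod_const, card_univ, Fintype.card_fin]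
    congr 1
    rw [Fintype.card_subtype_compl, Fintype.card_subtype_eq]
  have hCv : ∀ v : V, (univ.filter (fun h : V → Fin q => g v h = h v)).card ≤ q ^ (n - 1) := by
    intro v
    rw [← htarget v]
    apply Finset.card_le_card_of_injOn (fun h => Function.update h v z)
    · intro h _
      simp [Function.update_self]
    · intro h1 hh1 h2 hh2 he
      simp only [mem_coe, mem_filter, mem_univ, true_and] at hh1 hh2
      have hoff : ∀ u, u ≠ v → h1 u = h2 u := by
        intro u hu
        have h3 := congrFun he u
        simp only [] at h3
        rwa [Function.update_of_ne hu, Function.update_of_ne hu] at h3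
      have hvv : h1 v = h2 v := by
        rw [← hh1, ← hh2]
        apply hloc
        intro u hadj
        exact hoff u (G.ne_of_adj hadj).symm
      funext u
      by_cases hu : u = v
      · subst hu
        exact hvv
      · exact hoff u hu
  have htot : q ^ n ≤ n * q ^ (n - 1) := by
    calc q ^ n = Fintype.card (V → Fin q) := by
          rw [Fintype.card_pi, Finset.prod_const, card_univ, Fintype.card_fin]
      _ = (univ : Finset (V → Fin q)).card := card_univ.symm
      _ ≤ ((univ : Finset V).biUnion (fun v => univ.filter (fun h => g v h = h v))).card :=
          Finset.card_le_card hcover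
      _ ≤ ∑ v : V, (univ.filter (fun h : V → Fin q => g v h = h v)).card :=
          Finset.card_biUnion_le
      _ ≤ ∑ _v : V, q ^ (n - 1) := Finset.sum_le_sum (fun v _ => hCv v)
      _ = n * q ^ (n - 1) := by rw [Finset.sum_const, card_univ, smul_eq_mul]
  have hq' : q * q ^ (n - 1) ≤ n * q ^ (n - 1) := by
    calc q * q ^ (n - 1) = q ^ n := by
          rw [← pow_succ']
          congr 1
          omega
      _ ≤ n * q ^ (n - 1) := htot
  exact Nat.le_of_mul_le_mul_right hq' (Nat.pow_pos hq)

/-- For every integer `d ≥ 2`, with `m = d ^ (d + 3)` and `q = d ^ (d - 2)`,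
the book graph `B_{d,m}` admits a winning guessing strategy with `q` colors, i.e.
`HG(B_{d,m}) ≥ d ^ (d - 2)`. -/
theorem bookGraph_hatWinning (d : ℕ) (hd : 2 ≤ d) :
    (bookGraph d (d ^ (d + 3))).HatWinning (d ^ (d - 2)) ∧
      d ^ (d - 2) ≤ (bookGraph d (d ^ (d + 3))).hatGuessingNumber := by
  have hwin : (bookGraph d (d ^ (d + 3))).HatWinning (d ^ (d - 2)) := by
    rcases hd.eq_or_lt with rfl | hd3
    · rw [show (2 : ℕ) ^ (2 - 2) = 1 from rfl]
      refine ⟨fun _ _ => 0, fun _ _ _ _ => rfl, fun h => ⟨Sum.inl 0, Subsingleton.elim _ _⟩⟩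
    · exact book_hatwinning_main d hd3
  refine ⟨hwin, ?_⟩
  apply le_csSup
  · refine ⟨d + d ^ (d + 3), ?_⟩
    rintro q' hq'
    have hne : Nonempty (Fin d ⊕ Fin (d ^ (d + 3))) := ⟨Sum.inl ⟨0, by omega⟩⟩
    have := hatWinning_le_card (bookGraph d (d ^ (d + 3))) q' hq'
    simpa [Fintype.card_sum, Fintype.card_fin] using this
  · exact hwin
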